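/- With the POD setup (snapshots y_1,…,y_N in an inner product space X, correlation matrix K with positive eigenvalues λ_1 ≥ … ≥ λ_d and POD basis φ_1,…,φ_d), let P^r denote the orthogonal projection onto span{φ_1,…,φ_r} for 1 ≤ r ≤ d. Then (1/N) Σ_{j=1}^N ‖y_j - P^r y_j‖_X² = Σ_{k=r+1}^d λ_k. -/

import Mathlib

open Finset

/-- POD error formula (Kunisch–Volkwein): with snapshots `y j`, correlation
matrix `K i j = (1/N)⟪y i, y j⟫` having spectral decomposition
`K i j = ∑ k, λ k * v k i * v k j` with positive eigenvalues `λ 1 ≥ … ≥ λ d`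
and orthonormal eigenvectors `v k`, POD modes
`φ k = (1/(√N √(λ k))) • ∑ j, v k j • y j`, and `P` the orthogonal projection
onto the span of the first `r` POD modes (`1 ≤ r ≤ d`), one has
`(1/N) ∑ j ‖y j - P (y j)‖² = ∑_{k > r} λ k`. -/
theorem pod_projection_error_formula
    {X : Type*} [NormedAddCommGroup X] [InnerProductSpace ℝ X]
    (N d : ℕ) (hN : 0 < N)
    (y : Fin N → X)
    (K : Matrix (Fin N) (Fin N) ℝ)
    (hK : ∀ i j, K i j = (1 / (N : ℝ)) * (inner ℝ (y i) (y j) : ℝ))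
    (lam : Fin d → ℝ) (hlam : ∀ k, 0 < lam k)
    (hmono : ∀ k l : Fin d, k ≤ l → lam l ≤ lam k)
    (v : Fin d → (Fin N → ℝ))
    (hortho : ∀ k l, ∑ j, v k j * v l j = if k = l then (1 : ℝ) else 0)
    (hspec : ∀ i j, K i j = ∑ k, lam k * v k i * v k j)
    (φ : Fin d → X)
    (hφ : ∀ k, φ k = (1 / (Real.sqrt N * Real.sqrt (lam k))) • ∑ j, v k j • y j)
    (r : ℕ) (hr1 : 1 ≤ r) (hrd : r ≤ d)
    (P : X →ₗ[ℝ] X)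
    (hPmem : ∀ x : X,
      P x ∈ Submodule.span ℝ {z : X | ∃ k : Fin d, (k : ℕ) < r ∧ z = φ k})
    (hPorth : ∀ x : X, ∀ z ∈ Submodule.span ℝ
      {z : X | ∃ k : Fin d, (k : ℕ) < r ∧ z = φ k},
      (inner ℝ (x - P x) z : ℝ) = 0) :
    (1 / (N : ℝ)) * ∑ j, ‖y j - P (y j)‖ ^ 2
      = ∑ k ∈ univ.filter (fun k : Fin d => r ≤ (k : ℕ)), lam k := by
  have hN0 : (N : ℝ) ≠ 0 := Nat.cast_ne_zero.mpr hN.ne'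
  have hsqN : Real.sqrt N * Real.sqrt N = (N : ℝ) := Real.mul_self_sqrt (Nat.cast_nonneg N)
  have hsqN0 : Real.sqrt N ≠ 0 := by
    intro h; apply hN0; rw [← hsqN, h, mul_zero]
  have hsqlam : ∀ k, Real.sqrt (lam k) * Real.sqrt (lam k) = lam k :=
    fun k => Real.mul_self_sqrt (hlam k).le
  have hsqlam0 : ∀ k, Real.sqrt (lam k) ≠ 0 := by
    intro k h
    have := hsqlam k
    rw [h, mul_zero] at this
    exact (hlam k).ne this
  -- inner product of snapshots
  have hyy : ∀ i j, (inner ℝ (y i) (y j) : ℝ) = (N : ℝ) * ∑ m, lam m * v m i * v m j := by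
    intro i j
    have h := (hK i j).symm.trans (hspec i j)
    field_simp at h
    linarith
  -- inner of snapshot with POD mode
  have hyφ : ∀ j k, (inner ℝ (y j) (φ k) : ℝ) = Real.sqrt N * Real.sqrt (lam k) * v k j := by
    intro j k
    rw [hφ, inner_smul_right, inner_sum]
    simp_rw [real_inner_smul_right, hyy]
    have hswap : (∑ i, v k i * ((N : ℝ) * ∑ m, lam m * v m j * v m i))
        = ∑ m, ((N : ℝ) * (lam m * v m j)) * ∑ i, v k i * v m i := by
      simp_rw [Finset.mul_sum]
      rw [Finset.sum_comm]
      apply Finset.sum_congr rfl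
      intro m _
      apply Finset.sum_congr rfl
      intro i _
      ring
    rw [hswap]
    simp_rw [hortho, mul_ite, mul_one, mul_zero]
    rw [Finset.sum_ite_eq univ k fun m => (N : ℝ) * (lam m * v m j)]
    simp only [mem_univ, if_true]
    rw [div_mul_eq_mul_div, one_mul, div_eq_iff (mul_ne_zero hsqN0 (hsqlam0 k))]
    linear_combination (-(lam k * v k j)) * hsqN
      - (Real.sqrt N * Real.sqrt N * v k j) * hsqlam k
  -- orthonormality of POD modes
  have hφφ : ∀ k l, (inner ℝ (φ k) (φ l) : ℝ) = if k = l then (1 : ℝ) else 0 := by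
    intro k l
    rw [hφ k, real_inner_smul_left, sum_inner]
    simp_rw [real_inner_smul_left, hyφ]
    have : (∑ j, v k j * (Real.sqrt N * Real.sqrt (lam l) * v l j))
        = Real.sqrt N * Real.sqrt (lam l) * ∑ j, v k j * v l j := by
      rw [Finset.mul_sum]; apply Finset.sum_congr rfl; intros; ring
    rw [this, hortho]
    by_cases h : k = l
    · subst h
      simp only [if_pos rfl]
      field_simp
      exact div_self (hsqlam0 k)
    · simp [h]
  set S := Submodule.span ℝ {z : X | ∃ k : Fin d, (k : ℕ) < r ∧ z = φ k} with hS
  have hφS : ∀ k : Fin d, (k : ℕ) < r → φ k ∈ S :=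
    fun k hk => Submodule.subset_span ⟨k, hk, rfl⟩
  set Fr := univ.filter (fun k : Fin d => (k : ℕ) < r) with hFr
  set c : Fin N → Fin d → ℝ := fun j k => (inner ℝ (y j) (φ k) : ℝ) with hc
  set Q : Fin N → X := fun j => ∑ k ∈ Fr, c j k • φ k with hQ
  have hQmem : ∀ j, Q j ∈ S := by
    intro j
    apply Submodule.sum_mem
    intro k hk
    exact Submodule.smul_mem _ _ (hφS k (by simpa [hFr] using hk))
  have hQφ : ∀ j, ∀ l : Fin d, (l : ℕ) < r → (inner ℝ (Q j) (φ l) : ℝ) = c j l := by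
    intro j l hl
    rw [hQ]
    simp only
    rw [sum_inner]
    simp_rw [real_inner_smul_left, hφφ]
    rw [Finset.sum_eq_single l]
    · simp
    · intro b _ hb; simp [hb]
    · intro h; exact absurd (by simp [hFr, hl]) h
  have hQorth : ∀ j, ∀ z ∈ S, (inner ℝ (y j - Q j) z : ℝ) = 0 := by
    intro j z hz
    induction hz using Submodule.span_induction with
    | mem z hz =>
      obtain ⟨l, hl, rfl⟩ := hz
      rw [inner_sub_left, hQφ j l hl]
      exact sub_eq_zero.mpr rfl
    | zero => exact inner_zero_right _
    | add a b _ _ ha hb => rw [inner_add_right, ha, hb, add_zero]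
    | smul t a _ ha => rw [real_inner_smul_right, ha, mul_zero]
  have hPQ : ∀ j, P (y j) = Q j := by
    intro j
    have hD : P (y j) - Q j ∈ S := Submodule.sub_mem _ (hPmem (y j)) (hQmem j)
    have h1 := hPorth (y j) _ hD
    have h2 := hQorth j _ hD
    have h3 : (inner ℝ (P (y j) - Q j) (P (y j) - Q j) : ℝ) = 0 := by
      have e : (inner ℝ (P (y j) - Q j) (P (y j) - Q j) : ℝ)
          = (inner ℝ (y j - Q j) (P (y j) - Q j) : ℝ)
            - (inner ℝ (y j - P (y j)) (P (y j) - Q j) : ℝ) := by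
        rw [← inner_sub_left]
        congr 1
        abel
      rw [e, h1, h2, sub_zero]
    exact sub_eq_zero.mp (inner_self_eq_zero.mp h3)
  -- pointwise error
  have hnorm : ∀ j, ‖y j - P (y j)‖ ^ 2
      = (N : ℝ) * ∑ k ∈ univ.filter (fun k : Fin d => r ≤ (k : ℕ)), lam k * (v k j * v k j) := by
    intro j
    have e1 : ‖y j - P (y j)‖ ^ 2 = (inner ℝ (y j - P (y j)) (y j) : ℝ) := by
      rw [← real_inner_self_eq_norm_sq, inner_sub_right,
        hPorth (y j) _ (hPmem (y j)), sub_zero]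
    have hyyj : (inner ℝ (y j) (y j) : ℝ) = (N : ℝ) * ∑ m, lam m * (v m j * v m j) := by
      rw [hyy]
      congr 1
      apply Finset.sum_congr rfl
      intros
      ring
    rw [e1, inner_sub_left, hyyj, hPQ j, hQ]
    simp only
    rw [sum_inner]
    have e2 : ∀ k ∈ Fr, (inner ℝ (c j k • φ k) (y j) : ℝ) = (N : ℝ) * (lam k * (v k j * v k j)) := by
      intro k _
      rw [real_inner_smul_left, real_inner_comm, hc]
      simp only
      rw [hyφ]
      linear_combination (Real.sqrt (lam k) * Real.sqrt (lam k) * (v k j * v k j)) * hsqN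
        + ((N : ℝ) * (v k j * v k j)) * hsqlam k
    rw [Finset.sum_congr rfl e2]
    rw [← Finset.mul_sum, ← mul_sub, ← Finset.sum_filter_add_sum_filter_not univ
      (fun k : Fin d => (k : ℕ) < r) (fun k => lam k * (v k j * v k j))]
    have : univ.filter (fun k : Fin d => ¬ (k : ℕ) < r)
        = univ.filter (fun k : Fin d => r ≤ (k : ℕ)) := by
      apply Finset.filter_congr; intro k _; simp [not_lt]
    rw [this, ← hFr]
    ring
  simp_rw [hnorm]
  rw [← Finset.mul_sum, Finset.sum_comm]
  have : ∀ k ∈ univ.filter (fun k : Fin d => r ≤ (k : ℕ)),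
      (∑ j, lam k * (v k j * v k j)) = lam k := by
    intro k _
    rw [← Finset.mul_sum, hortho k k]
    simp
  rw [Finset.sum_congr rfl this, one_div, inv_mul_cancel_left₀ hN0]
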